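/- There exist ε > 0 and N ≥ 0 such that for every n ≥ N, the number of elements g of the ball B_n in the free group F₂ (with respect to the generating set S_γ) satisfying κ(g) < 0 is at least ε·#B_n. In other words, F₂ has negative conjugation curvature with positive density with respect to S_γ. -/

import Mathlib

section Defs

variable {G : Type*} [Group G]

/-- Word length with respect to a generating set `S`: the least `n` such that `g`
is a product of `n` elements of `S`. -/
noncomputable def wlen (S : Set G) (g : G) : ℕ :=
  sInf {n | ∃ l : List G, (∀ x ∈ l, x ∈ S) ∧ l.length = n ∧ l.prod = g}

/-- Word metric: `d(g,h) = |h⁻¹ g|`. -/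
noncomputable def wdist (S : Set G) (x y : G) : ℝ := wlen S (y⁻¹ * x)

/-- Gromov product `(x,y)_w = ½ (d(x,w) + d(w,y) − d(x,y))`. -/
noncomputable def gp (S : Set G) (x y w : G) : ℝ :=
  (wdist S x w + wdist S w y - wdist S x y) / 2

/-- The word metric is `δ`-hyperbolic (Gromov's four-point condition). -/
def IsDeltaHyperbolic (S : Set G) (δ : ℝ) : Prop :=
  ∀ x y z w : G, gp S x y w ≥ min (gp S x z w) (gp S y z w) - δ

/-- A group is virtually cyclic if it has a cyclic subgroup of finite index. -/
def VirtuallyCyclic (G : Type*) [Group G] : Prop :=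
  ∃ H : Subgroup G, IsCyclic H ∧ H.FiniteIndex

/-- `GenCon(g)`: the average word length of the conjugates of `g`
by the generators in `S`. -/
noncomputable def genCon (S : Set G) (g : G) : ℝ :=
  (∑ᶠ s ∈ S, (wlen S (s⁻¹ * g * s) : ℝ)) / S.ncard

/-- Conjugation curvature `κ(g) = (|g| − GenCon(g)) / |g|`. -/
noncomputable def kappa (S : Set G) (g : G) : ℝ :=
  ((wlen S g : ℝ) - genCon S g) / (wlen S g)

/-- `k`-spherical conjugation curvature
`κ_k(g) = (|g| − (1/#S_k) Σ_{s ∈ S_k} d(gs,s)) / |g|`; note `d(gs,s) = |s⁻¹ g s|`. -/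
noncomputable def kappaK (S : Set G) (k : ℕ) (g : G) : ℝ :=
  ((wlen S g : ℝ) -
      (∑ᶠ s ∈ {x : G | wlen S x = k}, (wlen S (s⁻¹ * g * s) : ℝ)) /
        ({x : G | wlen S x = k} : Set G).ncard) / (wlen S g)

end Defs

/-- The free group of rank 2. -/
abbrev F2 := FreeGroup Bool

namespace F2Gen

/-- The generator `a`. -/
def a : F2 := FreeGroup.of true

/-- The generator `b`. -/
def b : F2 := FreeGroup.of false

end F2Gen

open F2Gen

/-- The word `w = ababa`. -/
def wγ : F2 := a * b * a * b * a

/-- The generating set `S_γ = {a, a⁻¹, b, b⁻¹, w, w⁻¹}` of `F₂`. -/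
def Sγ : Set F2 := {a, a⁻¹, b, b⁻¹, wγ, wγ⁻¹}

namespace NCPD

/-! ### Letters and reduced words -/

/-- The single-letter element of `F2`. -/
def lett (c : Bool × Bool) : F2 := FreeGroup.mk [c]

lemma lett_inv (x e : Bool) : (lett (x, e))⁻¹ = lett (x, !e) := by
  rw [lett, FreeGroup.inv_mk]; rfl

lemma toWord_lett_mul (x : Bool) (e : Bool) (g : F2)
    (h : g.toWord.head? ≠ some (x, !e)) :
    (lett (x, e) * g).toWord = (x, e) :: g.toWord := by
  conv_lhs => rw [← FreeGroup.mk_toWord (x := g)]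
  rw [lett, FreeGroup.mul_mk]
  show (FreeGroup.mk ((x,e) :: g.toWord)).toWord = _
  rw [FreeGroup.toWord_mk, FreeGroup.reduce.cons, FreeGroup.reduce_toWord]
  cases hW : g.toWord with
  | nil => rfl
  | cons hd tl =>
    have hne : ¬((x = hd.1) ∧ (e = !hd.2)) := by
      rintro ⟨h1, h2⟩
      apply h; rw [hW]
      simp only [List.head?_cons, Option.some_inj]
      cases hd; simp_all
    simp [hne]

lemma invRev_cons (c : Bool × Bool) (l : List (Bool × Bool)) :
    FreeGroup.invRev (c :: l) = FreeGroup.invRev l ++ [(c.1, !c.2)] := by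
  simp [FreeGroup.invRev]

lemma toWord_mul_lett_head (x e : Bool) (g : F2) (h2 : 2 ≤ g.toWord.length) :
    (g * lett (x, e)).toWord.head? = g.toWord.head? := by
  have hkey : g * lett (x, e) = (lett (x, !e) * g⁻¹)⁻¹ := by
    rw [← lett_inv]; simp
  by_cases hc : (g⁻¹).toWord.head? = some (x, e)
  · -- cancellation case
    obtain ⟨tl, htl⟩ : ∃ tl, (g⁻¹).toWord = (x, e) :: tl := by
      cases hW : (g⁻¹).toWord with
      | nil => rw [hW] at hc; simp at hc
      | cons hd tl =>
        rw [hW] at hc; simp at hc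
        exact ⟨tl, by rw [hc]⟩
    have hred : (lett (x, !e) * g⁻¹).toWord = tl := by
      conv_lhs => rw [← FreeGroup.mk_toWord (x := g⁻¹)]
      rw [lett, FreeGroup.mul_mk]
      show (FreeGroup.mk ((x, !e) :: (g⁻¹).toWord)).toWord = _
      rw [FreeGroup.toWord_mk, FreeGroup.reduce.cons, FreeGroup.reduce_toWord, htl]
      simp
    have hgw : g.toWord = FreeGroup.invRev tl ++ [(x, !e)] := by
      have hg2 : g.toWord = FreeGroup.invRev ((g⁻¹).toWord) := by
        rw [FreeGroup.toWord_inv, FreeGroup.invRev_invRev]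
      rw [hg2, htl, invRev_cons]
    have hres : (g * lett (x, e)).toWord = FreeGroup.invRev tl := by
      rw [hkey, FreeGroup.toWord_inv, hred]
    have hne : FreeGroup.invRev tl ≠ [] := by
      intro hnil
      rw [hgw, hnil] at h2
      simp at h2
    rw [hres, hgw, List.head?_append_of_ne_nil _ hne]
  · -- no cancellation
    have hred : (lett (x, !e) * g⁻¹).toWord = (x, !e) :: (g⁻¹).toWord := by
      apply toWord_lett_mul
      simpa using hc
    have hres : (g * lett (x, e)).toWord = g.toWord ++ [(x, e)] := by
      rw [hkey, FreeGroup.toWord_inv, hred, invRev_cons]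
      congr 1
      · rw [← FreeGroup.toWord_inv, inv_inv]
      · simp
    have hne : g.toWord ≠ [] := by
      intro hnil; rw [hnil] at h2; simp at h2
    rw [hres, List.head?_append_of_ne_nil _ hne]

/-- Main ping-pong lemma: conjugating an element not starting with the letter
`(x,e)` by that letter produces an element starting with `(x,!e)`. -/
lemma head_conj (x e : Bool) (g : F2) (hg : g ≠ 1)
    (h : g.toWord.head? ≠ some (x, e)) :
    ((lett (x, e))⁻¹ * g * lett (x, e)).toWord.head? = some (x, !e) := by
  have h1 : ((lett (x, e))⁻¹ * g).toWord = (x, !e) :: g.toWord := by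
    rw [lett_inv]
    apply toWord_lett_mul
    simpa using h
  have h2 : 2 ≤ ((lett (x, e))⁻¹ * g).toWord.length := by
    have hgw : g.toWord ≠ [] := by
      simpa [FreeGroup.toWord_eq_nil_iff] using hg
    cases hW : g.toWord with
    | nil => exact absurd hW hgw
    | cons hd tl => simp [h1, hW]
  have h3 := toWord_mul_lett_head x e ((lett (x, e))⁻¹ * g) h2
  rw [h1] at h3
  simpa using h3

/-! ### Basic facts about conjugation -/

lemma conj_injective (s : F2) : Function.Injective (fun g : F2 => s⁻¹ * g * s) := by
  intro g h hgh; simpa using hgh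

lemma conj_ne_one {s g : F2} (hg : g ≠ 1) : s⁻¹ * g * s ≠ 1 := by
  intro h
  apply hg
  have h2 : g * s = s := by
    have := congrArg (fun z => s * z) h
    simpa [mul_assoc] using this
  have := mul_right_cancel (b := s) (a := g) (c := 1) (by simpa using h2)
  exact this

/-! ### Counting: ping-pong for conjugation on finite sets -/

lemma count_letter (F : Finset F2) (h1 : (1:F2) ∉ F) (x e : Bool) :
    F.card ≤ (F.filter (fun g => g.toWord.head? = some (x, e))).card
        + (F.filter (fun g => g.toWord.head? = some (x, !e))).card
        + ((F.image (fun g => (lett (x, e))⁻¹ * g * lett (x, e))) \ F).card := by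
  classical
  have hinj : Function.Injective (fun g : F2 => (lett (x, e))⁻¹ * g * lett (x, e)) :=
    conj_injective _
  have hsplit := Finset.card_filter_add_card_filter_not
    (s := F) (p := fun g => g.toWord.head? = some (x, e))
  have himg : (F.filter (fun g => ¬(g.toWord.head? = some (x, e)))).image
        (fun g : F2 => (lett (x, e))⁻¹ * g * lett (x, e)) ⊆
      (F.filter (fun g => g.toWord.head? = some (x, !e))) ∪
        ((F.image (fun g : F2 => (lett (x, e))⁻¹ * g * lett (x, e))) \ F) := by
    intro h hh
    obtain ⟨g, hgF₁, rfl⟩ := Finset.mem_image.mp hh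
    rw [Finset.mem_filter] at hgF₁
    obtain ⟨hgF, hcond⟩ := hgF₁
    have hgne : g ≠ 1 := fun he => h1 (he ▸ hgF)
    have hhead := head_conj x e g hgne hcond
    by_cases hin : (lett (x, e))⁻¹ * g * lett (x, e) ∈ F
    · exact Finset.mem_union_left _ (Finset.mem_filter.mpr ⟨hin, hhead⟩)
    · exact Finset.mem_union_right _ (Finset.mem_sdiff.mpr
        ⟨Finset.mem_image_of_mem _ hgF, hin⟩)
  have hc1 : (F.filter (fun g => ¬(g.toWord.head? = some (x, e)))).card
      = ((F.filter (fun g => ¬(g.toWord.head? = some (x, e)))).image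
          (fun g : F2 => (lett (x, e))⁻¹ * g * lett (x, e))).card :=
    (Finset.card_image_of_injective _ hinj).symm
  have hc2 := Finset.card_le_card himg
  have hc3 := Finset.card_union_le
    (F.filter (fun g => g.toWord.head? = some (x, !e)))
    ((F.image (fun g : F2 => (lett (x, e))⁻¹ * g * lett (x, e))) \ F)
  omega

lemma four_classes (F : Finset F2) :
    (F.filter (fun g => g.toWord.head? = some (true, true))).card
    + (F.filter (fun g => g.toWord.head? = some (true, false))).card
    + (F.filter (fun g => g.toWord.head? = some (false, true))).card
    + (F.filter (fun g => g.toWord.head? = some (false, false))).card ≤ F.card := by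
  classical
  set A := F.filter (fun g => g.toWord.head? = some (true, true)) with hA
  set B := F.filter (fun g => g.toWord.head? = some (true, false)) with hB
  set C := F.filter (fun g => g.toWord.head? = some (false, true)) with hC
  set D := F.filter (fun g => g.toWord.head? = some (false, false)) with hD
  have hdisj : ∀ (c d : Bool × Bool), c ≠ d →
      Disjoint (F.filter (fun g => g.toWord.head? = some c))
               (F.filter (fun g => g.toWord.head? = some d)) := by
    intro c d hcd
    rw [Finset.disjoint_left]
    intro g hgc hgd
    rw [Finset.mem_filter] at hgc hgd
    exact hcd (Option.some_inj.mp (hgc.2.symm.trans hgd.2))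
  have hAB : Disjoint A B := hdisj _ _ (by decide)
  have hABC : Disjoint (A ∪ B) C :=
    Finset.disjoint_union_left.mpr ⟨hdisj _ _ (by decide), hdisj _ _ (by decide)⟩
  have hABCD : Disjoint ((A ∪ B) ∪ C) D := by
    refine Finset.disjoint_union_left.mpr ⟨Finset.disjoint_union_left.mpr
      ⟨hdisj _ _ (by decide), hdisj _ _ (by decide)⟩, hdisj _ _ (by decide)⟩
  have hcard : (((A ∪ B) ∪ C) ∪ D).card = A.card + B.card + C.card + D.card := by
    rw [Finset.card_union_of_disjoint hABCD, Finset.card_union_of_disjoint hABC,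
      Finset.card_union_of_disjoint hAB]
  have hsub : ((A ∪ B) ∪ C) ∪ D ⊆ F := by
    intro g hg
    simp only [Finset.mem_union, hA, hB, hC, hD, Finset.mem_filter] at hg
    rcases hg with ((h|h)|h)|h <;> exact h.1
  have := Finset.card_le_card hsub
  omega

lemma pingpong (F : Finset F2) (h1 : (1:F2) ∉ F) :
    2 * F.card ≤
      ((F.image (fun g => (lett (true, true))⁻¹ * g * lett (true, true))) \ F).card
    + ((F.image (fun g => (lett (true, false))⁻¹ * g * lett (true, false))) \ F).card
    + ((F.image (fun g => (lett (false, true))⁻¹ * g * lett (false, true))) \ F).card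
    + ((F.image (fun g => (lett (false, false))⁻¹ * g * lett (false, false))) \ F).card := by
  have h₁ := count_letter F h1 true true
  have h₂ := count_letter F h1 true false
  have h₃ := count_letter F h1 false true
  have h₄ := count_letter F h1 false false
  have h5 := four_classes F
  simp only [Bool.not_true, Bool.not_false] at h₁ h₂ h₃ h₄
  omega

/-! ### Rearrangement inequality on balls -/

lemma rearrange (f : F2 → ℕ) (n : ℕ) (F : Finset F2)
    (hmem : ∀ g ∈ F, f g ≤ n)
    (hout : ∀ g : F2, g ≠ 1 → f g ≤ n → g ∈ F)
    (h1 : (1:F2) ∉ F) (s : F2) :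
    ∑ g ∈ F, f g + ((F.image (fun g => s⁻¹ * g * s)) \ F).card
      ≤ ∑ g ∈ F, f (s⁻¹ * g * s) := by
  classical
  have hinj : Function.Injective (fun g : F2 => s⁻¹ * g * s) := conj_injective s
  set C := F.image (fun g : F2 => s⁻¹ * g * s) with hC
  have hsum : ∑ g ∈ F, f (s⁻¹ * g * s) = ∑ h ∈ C, f h := by
    rw [hC, Finset.sum_image (fun x _ y _ h => hinj h)]
  have hcard : C.card = F.card := Finset.card_image_of_injective _ hinj
  have hd1 : ∑ h ∈ C ∩ F, f h + ∑ h ∈ C \ F, f h = ∑ h ∈ C, f h :=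
    Finset.sum_inter_add_sum_sdiff _ _ _
  have hd2 : ∑ h ∈ F ∩ C, f h + ∑ h ∈ F \ C, f h = ∑ h ∈ F, f h :=
    Finset.sum_inter_add_sum_sdiff _ _ _
  have hinter : C ∩ F = F ∩ C := Finset.inter_comm _ _
  have hlow : ∀ h ∈ C \ F, n + 1 ≤ f h := by
    intro h hh
    rw [Finset.mem_sdiff] at hh
    obtain ⟨hhC, hhF⟩ := hh
    rw [hC, Finset.mem_image] at hhC
    obtain ⟨g, hgF, rfl⟩ := hhC
    have hgne : g ≠ 1 := fun he => h1 (he ▸ hgF)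
    have hne : s⁻¹ * g * s ≠ 1 := conj_ne_one hgne
    by_contra hcon
    exact hhF (hout _ hne (by omega))
  have hlow2 : (C \ F).card * (n + 1) ≤ ∑ h ∈ C \ F, f h := by
    calc (C \ F).card * (n + 1) = (C \ F).card • (n + 1) := by simp
    _ ≤ ∑ h ∈ C \ F, f h := Finset.card_nsmul_le_sum _ _ _ hlow
  have hup : ∑ h ∈ F \ C, f h ≤ (F \ C).card * n := by
    calc ∑ h ∈ F \ C, f h ≤ (F \ C).card • n :=
      Finset.sum_le_card_nsmul _ _ _ (fun h hh => hmem h (Finset.mem_sdiff.mp hh).1)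
    _ = (F \ C).card * n := by simp
  have hc1 : (C ∩ F).card + (C \ F).card = C.card := Finset.card_inter_add_card_sdiff _ _
  have hc2 : (F ∩ C).card + (F \ C).card = F.card := Finset.card_inter_add_card_sdiff _ _
  have hsame : ∑ h ∈ C ∩ F, f h = ∑ h ∈ F ∩ C, f h := by rw [hinter]
  have hcc : (C ∩ F).card = (F ∩ C).card := by rw [hinter]
  have heqcard : (C \ F).card = (F \ C).card := by omega
  rw [hsum, ← hd1, ← hd2]
  have hnn : (F \ C).card * n = (C \ F).card * n := by rw [heqcard]
  have expand : (C \ F).card * (n + 1) = (C \ F).card * n + (C \ F).card := by ring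
  omega

/-! ### Facts about `Sγ` and `wlen` -/

/-- The generating set as a `Finset`. -/
def S6 : Finset F2 := {a, a⁻¹, b, b⁻¹, wγ, wγ⁻¹}

lemma Sγ_eq_coe : Sγ = (S6 : Set F2) := by
  simp only [Sγ, S6]
  simp

lemma a_eq_lett : a = lett (true, true) := rfl
lemma b_eq_lett : b = lett (false, true) := rfl
lemma ainv_eq_lett : a⁻¹ = lett (true, false) := by
  rw [a_eq_lett, lett_inv]; rfl
lemma binv_eq_lett : b⁻¹ = lett (false, false) := by
  rw [b_eq_lett, lett_inv]; rfl

lemma a_ne_one : a ≠ (1 : F2) := FreeGroup.of_ne_one true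

lemma card_S6 : S6.card = 6 := by decide

lemma a_mem : a ∈ Sγ := by simp [Sγ]
lemma ainv_mem : a⁻¹ ∈ Sγ := by simp [Sγ]
lemma b_mem : b ∈ Sγ := by simp [Sγ]
lemma binv_mem : b⁻¹ ∈ Sγ := by simp [Sγ]

lemma inv_mem_Sγ {s : F2} (h : s ∈ Sγ) : s⁻¹ ∈ Sγ := by
  simp only [Sγ, Set.mem_insert_iff, Set.mem_singleton_iff] at h ⊢
  rcases h with h|h|h|h|h|h <;> subst h <;> simp

/-- every element admits a representation over Sγ -/
lemma exists_repr (g : F2) : ∃ l : List F2, (∀ x ∈ l, x ∈ Sγ) ∧ l.prod = g := by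
  induction g using FreeGroup.induction_on with
  | C1 => exact ⟨[], by simp⟩
  | of x =>
    have hpure : (pure : Bool → F2) = FreeGroup.of := rfl
    cases x
    · exact ⟨[b], by simp [b_mem], by simp [hpure, b]⟩
    · exact ⟨[a], by simp [a_mem], by simp [hpure, a]⟩
  | inv_of x _ =>
    have hpure : (pure : Bool → F2) = FreeGroup.of := rfl
    cases x
    · exact ⟨[b⁻¹], by simp [binv_mem], by simp [hpure, b]⟩
    · exact ⟨[a⁻¹], by simp [ainv_mem], by simp [hpure, a]⟩
  | mul x y hx hy =>
    obtain ⟨lx, hlx, hpx⟩ := hx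
    obtain ⟨ly, hly, hpy⟩ := hy
    refine ⟨lx ++ ly, ?_, by simp [hpx, hpy]⟩
    intro z hz
    rcases List.mem_append.mp hz with h|h
    exacts [hlx z h, hly z h]

lemma wlen_le {g : F2} {l : List F2} (hl : ∀ x ∈ l, x ∈ Sγ) (hp : l.prod = g) :
    wlen Sγ g ≤ l.length :=
  Nat.sInf_le ⟨l, hl, rfl, hp⟩

lemma wlen_spec (g : F2) :
    ∃ l : List F2, (∀ x ∈ l, x ∈ Sγ) ∧ l.length = wlen Sγ g ∧ l.prod = g := by
  have hne : {n | ∃ l : List F2, (∀ x ∈ l, x ∈ Sγ) ∧ l.length = n ∧ l.prod = g}.Nonempty := by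
    obtain ⟨l, hl, hp⟩ := exists_repr g
    exact ⟨l.length, l, hl, rfl, hp⟩
  exact Nat.sInf_mem hne

lemma wlen_one : wlen Sγ (1 : F2) = 0 :=
  Nat.le_zero.mp (wlen_le (l := []) (by simp) (by simp))

lemma one_le_wlen {g : F2} (hg : g ≠ 1) : 1 ≤ wlen Sγ g := by
  by_contra h
  push_neg at h
  interval_cases hw : wlen Sγ g
  obtain ⟨l, _, hlen, hp⟩ := wlen_spec g
  rw [hw] at hlen
  rw [List.length_eq_zero_iff] at hlen
  subst hlen
  simp at hp
  exact hg hp.symm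

lemma wlen_mul_le (x y : F2) : wlen Sγ (x * y) ≤ wlen Sγ x + wlen Sγ y := by
  obtain ⟨lx, hlx, hlenx, hpx⟩ := wlen_spec x
  obtain ⟨ly, hly, hleny, hpy⟩ := wlen_spec y
  have := wlen_le (g := x * y) (l := lx ++ ly) (fun z hz => by
    rcases List.mem_append.mp hz with h|h
    exacts [hlx z h, hly z h]) (by rw [List.prod_append, hpx, hpy])
  simpa [hlenx, hleny] using this

lemma wlen_single {s : F2} (hs : s ∈ Sγ) : wlen Sγ s ≤ 1 :=
  wlen_le (l := [s]) (by simpa) (by simp)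

lemma wlen_conj_le {s : F2} (hs : s ∈ Sγ) (g : F2) :
    wlen Sγ (s⁻¹ * g * s) ≤ wlen Sγ g + 2 := by
  have h1 := wlen_mul_le (s⁻¹ * g) s
  have h2 := wlen_mul_le s⁻¹ g
  have h3 := wlen_single hs
  have h4 := wlen_single (inv_mem_Sγ hs)
  omega

/-- balls are finite -/
lemma ball_finite (n : ℕ) : {g : F2 | wlen Sγ g ≤ n}.Finite := by
  induction n with
  | zero =>
    apply Set.Finite.subset (Set.finite_singleton (1 : F2))
    intro g hg
    simp only [Set.mem_setOf_eq, Nat.le_zero] at hg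
    by_contra hne
    have := one_le_wlen (g := g) (by simpa using hne)
    omega
  | succ n ih =>
    have hSfin : Sγ.Finite := by
      simp only [Sγ]
      exact Set.Finite.insert _ (Set.Finite.insert _ (Set.Finite.insert _
        (Set.Finite.insert _ (Set.Finite.insert _ (Set.finite_singleton _)))))
    apply Set.Finite.subset (ih.union ((hSfin.biUnion (fun s _ => ih.image (fun g => s * g)))))
    intro g hg
    simp only [Set.mem_setOf_eq] at hg
    obtain ⟨l, hl, hlen, hp⟩ := wlen_spec g
    cases l with
    | nil =>
      left
      simp only [List.prod_nil] at hp
      subst hp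
      simp [Set.mem_setOf_eq, wlen_one]
    | cons s t =>
      right
      simp only [Set.mem_iUnion]
      refine ⟨s, hl s (by simp), t.prod, ?_, by simpa using hp.symm ▸ rfl⟩
      have hle : wlen Sγ t.prod ≤ t.length := wlen_le (fun z hz => hl z (by simp [hz])) rfl
      simp only [Set.mem_setOf_eq]
      simp only [List.length_cons] at hlen
      omega

end NCPD

open NCPD in
/-- With respect to `S_γ`, `F₂` has negative conjugation curvature with positive density:
there exist `ε > 0` and `N` such that for all `n ≥ N`, the number of elements of the
ball `B_n` with negative curvature is at least `ε · #B_n`. -/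
theorem negative_curvature_positive_density :
    ∃ ε : ℝ, 0 < ε ∧ ∃ N : ℕ, ∀ n : ℕ, N ≤ n →
      ε * (({g : F2 | wlen Sγ g ≤ n} : Set F2).ncard : ℝ) ≤
        (({g : F2 | wlen Sγ g ≤ n ∧ g ≠ 1 ∧ kappa Sγ g < 0} : Set F2).ncard : ℝ) := by
  classical
  refine ⟨1/12, by norm_num, 1, ?_⟩
  intro n hn
  have hfin := ball_finite n
  set B : Finset F2 := hfin.toFinset with hB
  have hBmem : ∀ g : F2, g ∈ B ↔ wlen Sγ g ≤ n := by
    intro g; rw [hB, Set.Finite.mem_toFinset]; rfl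
  set F : Finset F2 := B.erase 1 with hF
  have hFmem : ∀ g : F2, g ∈ F ↔ (wlen Sγ g ≤ n ∧ g ≠ 1) := by
    intro g
    rw [hF, Finset.mem_erase, hBmem]
    tauto
  have h1F : (1:F2) ∉ F := by simp [hF]
  have hmem : ∀ g ∈ F, wlen Sγ g ≤ n := fun g hg => ((hFmem g).mp hg).1
  have hout : ∀ g : F2, g ≠ 1 → wlen Sγ g ≤ n → g ∈ F :=
    fun g hg hle => (hFmem g).mpr ⟨hle, hg⟩
  -- the rearrangement inequality for each generator
  have KEY1 : ∀ s : F2,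
      ∑ g ∈ F, wlen Sγ g + ((F.image (fun g => s⁻¹ * g * s)) \ F).card
        ≤ ∑ g ∈ F, wlen Sγ (s⁻¹ * g * s) :=
    fun s => rearrange (wlen Sγ) n F hmem hout h1F s
  -- ping-pong lower bound for the four standard letters
  have KEY2 : 2 * F.card ≤
      ((F.image (fun g => a⁻¹ * g * a)) \ F).card
    + ((F.image (fun g => (a⁻¹)⁻¹ * g * a⁻¹)) \ F).card
    + ((F.image (fun g => b⁻¹ * g * b)) \ F).card
    + ((F.image (fun g => (b⁻¹)⁻¹ * g * b⁻¹)) \ F).card := by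
    have h := pingpong F h1F
    rw [← a_eq_lett, ← ainv_eq_lett, ← b_eq_lett, ← binv_eq_lett] at h
    exact h
  -- sum over the whole generating set
  have hsub4 : ({a, a⁻¹, b, b⁻¹} : Finset F2) ⊆ S6 := by
    intro s hs
    simp only [S6, Finset.mem_insert, Finset.mem_singleton] at hs ⊢
    tauto
  have hdist4 : a ≠ a⁻¹ ∧ a ≠ b ∧ a ≠ b⁻¹ ∧ a⁻¹ ≠ b ∧ a⁻¹ ≠ b⁻¹ ∧ b ≠ b⁻¹ := by
    refine ⟨?_, ?_, ?_, ?_, ?_, ?_⟩ <;>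
      exact FreeGroup.toWord_injective.ne_iff.mp (by decide)
  have hsum4 : ∑ s ∈ ({a, a⁻¹, b, b⁻¹} : Finset F2),
      ((F.image (fun g => s⁻¹ * g * s)) \ F).card
      = ((F.image (fun g => a⁻¹ * g * a)) \ F).card
      + ((F.image (fun g => (a⁻¹)⁻¹ * g * a⁻¹)) \ F).card
      + ((F.image (fun g => b⁻¹ * g * b)) \ F).card
      + ((F.image (fun g => (b⁻¹)⁻¹ * g * b⁻¹)) \ F).card := by
    obtain ⟨d1, d2, d3, d4, d5, d6⟩ := hdist4
    rw [Finset.sum_insert (by simp [d1, d2, d3]),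
        Finset.sum_insert (by simp [d4, d5]),
        Finset.sum_insert (by simp [d6]),
        Finset.sum_singleton]
    ring
  have KEY3 : 6 * ∑ g ∈ F, wlen Sγ g + 2 * F.card
      ≤ ∑ s ∈ S6, ∑ g ∈ F, wlen Sγ (s⁻¹ * g * s) := by
    have step : ∑ s ∈ S6, (∑ g ∈ F, wlen Sγ g
          + ((F.image (fun g => s⁻¹ * g * s)) \ F).card)
        ≤ ∑ s ∈ S6, ∑ g ∈ F, wlen Sγ (s⁻¹ * g * s) :=
      Finset.sum_le_sum (fun s _ => KEY1 s)
    have hL : ∑ s ∈ S6, (∑ g ∈ F, wlen Sγ g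
          + ((F.image (fun g => s⁻¹ * g * s)) \ F).card)
        = 6 * ∑ g ∈ F, wlen Sγ g
          + ∑ s ∈ S6, ((F.image (fun g => s⁻¹ * g * s)) \ F).card := by
      rw [Finset.sum_add_distrib, Finset.sum_const, card_S6, smul_eq_mul]
    have hβ : ∑ s ∈ ({a, a⁻¹, b, b⁻¹} : Finset F2),
          ((F.image (fun g => s⁻¹ * g * s)) \ F).card
        ≤ ∑ s ∈ S6, ((F.image (fun g => s⁻¹ * g * s)) \ F).card :=
      Finset.sum_le_sum_of_subset hsub4
    rw [hsum4] at hβ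
    omega
  -- the set of negatively curved elements
  set Neg : Finset F2 :=
    F.filter (fun g => 6 * wlen Sγ g < ∑ s ∈ S6, wlen Sγ (s⁻¹ * g * s)) with hNeg
  have KEY4 : ∑ g ∈ F, ∑ s ∈ S6, wlen Sγ (s⁻¹ * g * s)
      ≤ 6 * ∑ g ∈ F, wlen Sγ g + 12 * Neg.card := by
    have hsplitsum : ∀ (f : F2 → ℕ), ∑ g ∈ F, f g
        = ∑ g ∈ Neg, f g + ∑ g ∈ F.filter
            (fun g => ¬(6 * wlen Sγ g < ∑ s ∈ S6, wlen Sγ (s⁻¹ * g * s))), f g := by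
      intro f
      rw [hNeg]
      exact (Finset.sum_filter_add_sum_filter_not F _ f).symm
    rw [hsplitsum (fun g => ∑ s ∈ S6, wlen Sγ (s⁻¹ * g * s)),
        hsplitsum (fun g => wlen Sγ g)]
    have hb1 : ∑ g ∈ Neg, ∑ s ∈ S6, wlen Sγ (s⁻¹ * g * s)
        ≤ ∑ g ∈ Neg, (wlen Sγ g + 2) * 6 := by
      apply Finset.sum_le_sum
      intro g _
      calc ∑ s ∈ S6, wlen Sγ (s⁻¹ * g * s) ≤ ∑ s ∈ S6, (wlen Sγ g + 2) := by
            apply Finset.sum_le_sum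
            intro s hs
            have hsS : s ∈ Sγ := by rw [Sγ_eq_coe]; exact_mod_cast hs
            exact wlen_conj_le hsS g
      _ = (wlen Sγ g + 2) * 6 := by rw [Finset.sum_const, card_S6, smul_eq_mul]; ring
    have hb2 : ∑ g ∈ F.filter
          (fun g => ¬(6 * wlen Sγ g < ∑ s ∈ S6, wlen Sγ (s⁻¹ * g * s))),
          ∑ s ∈ S6, wlen Sγ (s⁻¹ * g * s)
        ≤ ∑ g ∈ F.filter
          (fun g => ¬(6 * wlen Sγ g < ∑ s ∈ S6, wlen Sγ (s⁻¹ * g * s))),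
          6 * wlen Sγ g := by
      apply Finset.sum_le_sum
      intro g hg
      rw [Finset.mem_filter] at hg
      omega
    have he1 : ∑ g ∈ Neg, (wlen Sγ g + 2) * 6 = 6 * ∑ g ∈ Neg, wlen Sγ g + 12 * Neg.card := by
      calc ∑ g ∈ Neg, (wlen Sγ g + 2) * 6 = ∑ g ∈ Neg, (6 * wlen Sγ g + 12) :=
            Finset.sum_congr rfl (fun g _ => by ring)
        _ = ∑ g ∈ Neg, 6 * wlen Sγ g + ∑ g ∈ Neg, 12 := Finset.sum_add_distrib
        _ = 6 * ∑ g ∈ Neg, wlen Sγ g + 12 * Neg.card := by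
            rw [Finset.mul_sum, Finset.sum_const, smul_eq_mul]
            ring
    have he2 : ∑ g ∈ F.filter
          (fun g => ¬(6 * wlen Sγ g < ∑ s ∈ S6, wlen Sγ (s⁻¹ * g * s))),
          6 * wlen Sγ g
        = 6 * ∑ g ∈ F.filter
          (fun g => ¬(6 * wlen Sγ g < ∑ s ∈ S6, wlen Sγ (s⁻¹ * g * s))),
          wlen Sγ g := by
      rw [Finset.mul_sum]
    omega
  have hcomm : ∑ s ∈ S6, ∑ g ∈ F, wlen Sγ (s⁻¹ * g * s)
      = ∑ g ∈ F, ∑ s ∈ S6, wlen Sγ (s⁻¹ * g * s) := Finset.sum_comm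
  have hmain : 2 * F.card ≤ 12 * Neg.card := by omega
  -- cardinalities of the ball
  have h1B : (1:F2) ∈ B := (hBmem 1).mpr (by rw [wlen_one]; omega)
  have hBF : F.card + 1 = B.card := Finset.card_erase_add_one h1B
  have haF : a ∈ F := (hFmem a).mpr ⟨le_trans (wlen_single a_mem) hn, a_ne_one⟩
  have hF1 : 1 ≤ F.card := Finset.card_pos.mpr ⟨a, haF⟩
  have hcard : B.card ≤ 12 * Neg.card := by omega
  -- every element of Neg is negatively curved
  have hNsub : (Neg : Set F2) ⊆ {g : F2 | wlen Sγ g ≤ n ∧ g ≠ 1 ∧ kappa Sγ g < 0} := by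
    intro g hg
    rw [Finset.mem_coe, hNeg, Finset.mem_filter] at hg
    obtain ⟨hgF, hlt⟩ := hg
    obtain ⟨hglen, hgne⟩ := (hFmem g).mp hgF
    refine ⟨hglen, hgne, ?_⟩
    have hL1 : 1 ≤ wlen Sγ g := one_le_wlen hgne
    have hgc : genCon Sγ g = (∑ s ∈ S6, (wlen Sγ (s⁻¹ * g * s) : ℝ)) / 6 := by
      rw [genCon, Sγ_eq_coe, finsum_mem_coe_finset, Set.ncard_coe_finset, card_S6]
      norm_num
    have hcast : (∑ s ∈ S6, (wlen Sγ (s⁻¹ * g * s) : ℝ))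
        = ((∑ s ∈ S6, wlen Sγ (s⁻¹ * g * s) : ℕ) : ℝ) := by
      push_cast; ring
    have hlt' : (6:ℝ) * (wlen Sγ g : ℝ)
        < ((∑ s ∈ S6, wlen Sγ (s⁻¹ * g * s) : ℕ) : ℝ) := by
      exact_mod_cast hlt
    have hnum : (wlen Sγ g : ℝ) - genCon Sγ g < 0 := by
      rw [hgc, hcast]
      linarith
    have hden : (0:ℝ) < (wlen Sγ g : ℝ) := by
      exact_mod_cast hL1
    show ((wlen Sγ g : ℝ) - genCon Sγ g) / (wlen Sγ g) < 0
    exact div_neg_of_neg_of_pos hnum hden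
  have hTfin : {g : F2 | wlen Sγ g ≤ n ∧ g ≠ 1 ∧ kappa Sγ g < 0}.Finite :=
    hfin.subset (fun g hg => hg.1)
  have hN1 : Neg.card ≤ {g : F2 | wlen Sγ g ≤ n ∧ g ≠ 1 ∧ kappa Sγ g < 0}.ncard := by
    have := Set.ncard_le_ncard hNsub hTfin
    rwa [Set.ncard_coe_finset] at this
  have hBn : ({g : F2 | wlen Sγ g ≤ n} : Set F2).ncard = B.card :=
    Set.ncard_eq_toFinset_card _ hfin
  rw [hBn]
  have hr1 : (B.card : ℝ) ≤ 12 * (Neg.card : ℝ) := by exact_mod_cast hcard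
  have hr2 : (Neg.card : ℝ)
      ≤ ({g : F2 | wlen Sγ g ≤ n ∧ g ≠ 1 ∧ kappa Sγ g < 0} : Set F2).ncard := by
    exact_mod_cast hN1
  linarith
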